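/- Fix n ∈ ℕ, n ≥ 1. Let φ_n: ℕ → {0,1} send j to 0 if n - j is even and to 1 if n - j is odd. Define p_{n,s} ∈ ℚ(v) for s ∈ {1,…,n} recursively by p_{n,1} = v^{-φ_n(1)} and, for s > 1, p_{n,s} = (v^{ns} - v^{-ns})/(v^{φ_n(s)s}(v^n - v^{-n})) - Σ_{t=1}^{s-1} p_{n,t} [s choose t]_v v^{(φ_n(t)-φ_n(s))s}. Then in ℚ(v)[K,K⁻¹]: K^n - K^{-n} = (v^n - v^{-n}) Σ_{s=1}^{n} p_{n,s} k_s K^{φ_n(s)}, where k_s = (1/[s]_v!)∏_{j=0}^{s-1}(v^{-j}K - v^j K^{-1})/(v - v^{-1}). -/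

import Mathlib

open Finset

/-- Balanced quantum integer `[s]_v = (v^s - v^{-s})/(v - v⁻¹)`. -/
noncomputable def qint {F : Type*} [Field F] (v : F) (s : ℕ) : F :=
  (v ^ (s : ℤ) - v ^ (-(s : ℤ))) / (v - v⁻¹)

/-- Balanced quantum factorial `[n]_v! = ∏_{s=1}^n [s]_v`. -/
noncomputable def qfact {F : Type*} [Field F] (v : F) (n : ℕ) : F :=
  ∏ s ∈ Finset.Icc 1 n, qint v s

/-- Balanced Gaussian binomial coefficient `[n choose k]_v`, defined by the
balanced Pascal recursion `[n+1,k]_v = v^{-(n+1-k)}[n,k-1]_v + v^k [n,k]_v`. -/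
noncomputable def qbinom {F : Type*} [Field F] (v : F) : ℕ → ℕ → F
  | _, 0 => 1
  | 0, _ + 1 => 0
  | n + 1, k + 1 =>
      v ^ (-((n : ℤ) - k)) * qbinom v n k + v ^ ((k : ℤ) + 1) * qbinom v n (k + 1)

/-- `φ_n(j) = 0` if `n - j` is even, `1` if odd. -/
def phi (n j : ℕ) : ℕ := if Even ((n : ℤ) - j) then 0 else 1

/-- The polynomials `p_{n,s} ∈ ℚ(v)` defined recursively. -/
noncomputable def pp (n : ℕ) : ℕ → RatFunc ℚ
  | 0 => 0
  | 1 => (RatFunc.X : RatFunc ℚ) ^ (-(phi n 1 : ℤ))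
  | s + 2 =>
      ((RatFunc.X : RatFunc ℚ) ^ ((n : ℤ) * (s + 2)) -
          (RatFunc.X : RatFunc ℚ) ^ (-((n : ℤ) * (s + 2)))) /
        ((RatFunc.X : RatFunc ℚ) ^ ((phi n (s + 2) : ℤ) * (s + 2)) *
          ((RatFunc.X : RatFunc ℚ) ^ (n : ℤ) - (RatFunc.X : RatFunc ℚ) ^ (-(n : ℤ)))) -
      ∑ t ∈ (Finset.Ico 1 (s + 2)).attach,
        pp n t.1 * qbinom (RatFunc.X : RatFunc ℚ) (s + 2) t.1 *
          (RatFunc.X : RatFunc ℚ) ^ (((phi n t.1 : ℤ) - (phi n (s + 2) : ℤ)) * (s + 2))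
  decreasing_by exact (Finset.mem_Ico.mp t.2).2

open TensorProduct

/-- The Laurent polynomial ring `ℚ(v)[K, K⁻¹]`, i.e. the group algebra of `ℤ` over `ℚ(v)`. -/
noncomputable abbrev H7 := MonoidAlgebra (RatFunc ℚ) (Multiplicative ℤ)

/-- The group-like element `K^n`. -/
noncomputable def Kz (n : ℤ) : H7 :=
  MonoidAlgebra.of (RatFunc ℚ) (Multiplicative ℤ) (Multiplicative.ofAdd n)

/-- `k_s = (1/[s]_v!) ∏_{j=0}^{s-1} (v^{-j} K - v^j K⁻¹)/(v - v⁻¹)`. -/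
noncomputable def k7 (s : ℕ) : H7 :=
  (qfact (RatFunc.X : RatFunc ℚ) s)⁻¹ •
    ∏ j ∈ Finset.range s,
      ((RatFunc.X : RatFunc ℚ) - (RatFunc.X : RatFunc ℚ)⁻¹)⁻¹ •
        ((RatFunc.X : RatFunc ℚ) ^ (-(j : ℤ)) • Kz 1 -
          (RatFunc.X : RatFunc ℚ) ^ (j : ℤ) • Kz (-1))


noncomputable abbrev V : RatFunc ℚ := RatFunc.X

lemma V_ne : (V : RatFunc ℚ) ≠ 0 := RatFunc.X_ne_zero

lemma Vpow_one_iff (i : ℤ) (h : V ^ i = 1) : i = 0 := by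
  by_contra hi
  wlog hpos : 0 < i generalizing i
  · exact this (-i) (by rw [zpow_neg, h, inv_one]) (by omega) (by omega)
  lift i to ℕ using hpos.le
  rw [zpow_natCast] at h
  have : (Polynomial.X : Polynomial ℚ) ^ i = 1 := by
    apply RatFunc.algebraMap_injective ℚ
    simpa [map_pow, RatFunc.algebraMap_X] using h
  have := congrArg Polynomial.natDegree this
  simp [Polynomial.natDegree_X_pow] at this
  omega

lemma Vpow_inj : Function.Injective (fun i : ℤ => (V:RatFunc ℚ) ^ i) := by
  intro i j h
  simp only at h
  have : V ^ (i - j) = 1 := by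
    rw [zpow_sub₀ V_ne, h, div_self (zpow_ne_zero _ V_ne)]
  have := Vpow_one_iff _ this
  omega

lemma Vpow_ne (i : ℤ) : (V:RatFunc ℚ) ^ i ≠ 0 := zpow_ne_zero _ V_ne

lemma Vpow_sub_ne {i j : ℤ} (h : i ≠ j) : (V:RatFunc ℚ) ^ i - V ^ j ≠ 0 := by
  intro hc
  exact h (Vpow_inj (by simpa [sub_eq_zero] using hc))

lemma qint_ne {s : ℕ} (hs : 1 ≤ s) : qint (V:RatFunc ℚ) s ≠ 0 := by
  unfold qint
  apply div_ne_zero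
  · exact Vpow_sub_ne (by omega)
  · have : (V:RatFunc ℚ) - V⁻¹ = V ^ (1:ℤ) - V ^ (-1:ℤ) := by simp
    rw [this]; exact Vpow_sub_ne (by omega)

lemma qfact_ne (s : ℕ) : qfact (V:RatFunc ℚ) s ≠ 0 := by
  unfold qfact
  exact Finset.prod_ne_zero_iff.2 fun i hi => qint_ne (Finset.mem_Icc.mp hi).1

lemma qbinom_prod (n : ℕ) : ∀ k : ℕ,
    qbinom (V:RatFunc ℚ) n k * ∏ m ∈ Finset.Icc 1 k, ((V:RatFunc ℚ) ^ (m:ℤ) - V ^ (-(m:ℤ)))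
      = ∏ j ∈ Finset.range k, ((V:RatFunc ℚ) ^ ((n:ℤ) - j) - V ^ (-((n:ℤ) - j))) := by
  induction n with
  | zero =>
    intro k
    match k with
    | 0 => simp [qbinom]
    | k + 1 =>
      rw [qbinom]
      rw [Finset.prod_eq_zero (Finset.mem_range.mpr (Nat.succ_pos k))]
      · ring
      · simp
  | succ n ih =>
    intro k
    match k with
    | 0 => simp [qbinom]
    | k + 1 =>
      have key : V ^ (-((n:ℤ) - k)) * ((V:RatFunc ℚ)^((k:ℤ)+1) - V^(-((k:ℤ)+1)))
          + V^((k:ℤ)+1) * ((V:RatFunc ℚ)^((n:ℤ)-k) - V^(-((n:ℤ)-k)))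
          = V^((n:ℤ)+1) - V^(-((n:ℤ)+1)) := by
        rw [mul_sub, mul_sub, ← zpow_add₀ V_ne, ← zpow_add₀ V_ne, ← zpow_add₀ V_ne,
          ← zpow_add₀ V_ne]
        have e1 : -((n:ℤ) - k) + ((k:ℤ)+1) = 2*k+1-n := by ring
        have e2 : -((n:ℤ) - k) + (-((k:ℤ)+1)) = -((n:ℤ)+1) := by ring
        have e3 : ((k:ℤ)+1) + ((n:ℤ)-k) = (n:ℤ)+1 := by ring
        have e4 : ((k:ℤ)+1) + (-((n:ℤ)-k)) = 2*k+1-n := by ring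
        rw [e1, e2, e3, e4]; ring
      rw [qbinom]
      rw [Finset.prod_Icc_succ_top (Nat.le_add_left 1 k)]
      rw [Finset.prod_range_succ']
      have hQ : ∀ j ∈ Finset.range k,
          ((V:RatFunc ℚ) ^ (((n:ℤ)+1) - (j+1)) - V ^ (-(((n:ℤ)+1) - (j+1))))
            = ((V:RatFunc ℚ) ^ ((n:ℤ) - j) - V ^ (-((n:ℤ) - j))) := by
        intro j _
        norm_num
      push_cast
      rw [Finset.prod_congr rfl hQ]
      have ih1 := ih (k+1)
      rw [Finset.prod_Icc_succ_top (Nat.le_add_left 1 k)] at ih1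
      push_cast at ih1 ⊢
      calc (V ^ (-((n:ℤ) - k)) * qbinom V n k + V ^ ((k:ℤ) + 1) * qbinom V n (k + 1)) *
            ((∏ m ∈ Finset.Icc 1 k, ((V:RatFunc ℚ) ^ (m:ℤ) - V ^ (-(m:ℤ)))) *
              (V ^ ((k:ℤ)+1) - V ^ (-((k:ℤ)+1))))
          = V ^ (-((n:ℤ) - k)) * (V ^ ((k:ℤ)+1) - V ^ (-((k:ℤ)+1))) *
              (qbinom V n k * ∏ m ∈ Finset.Icc 1 k, ((V:RatFunc ℚ) ^ (m:ℤ) - V ^ (-(m:ℤ))))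
            + V ^ ((k:ℤ)+1) * (qbinom V n (k+1) *
                ((∏ m ∈ Finset.Icc 1 k, ((V:RatFunc ℚ) ^ (m:ℤ) - V ^ (-(m:ℤ)))) *
                  (V ^ ((k:ℤ)+1) - V ^ (-((k:ℤ)+1))))) := by ring
        _ = V ^ (-((n:ℤ) - k)) * (V ^ ((k:ℤ)+1) - V ^ (-((k:ℤ)+1))) *
              (∏ j ∈ Finset.range k, ((V:RatFunc ℚ) ^ ((n:ℤ) - j) - V ^ (-((n:ℤ) - j))))
            + V ^ ((k:ℤ)+1) * ∏ j ∈ Finset.range (k+1),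
                ((V:RatFunc ℚ) ^ ((n:ℤ) - j) - V ^ (-((n:ℤ) - j))) := by
              rw [ih k, ih1]
        _ = (∏ j ∈ Finset.range k, ((V:RatFunc ℚ) ^ ((n:ℤ) - j) - V ^ (-((n:ℤ) - j)))) *
              (V^((n:ℤ)+1) - V^(-((n:ℤ)+1))) := by
              rw [Finset.prod_range_succ]
              rw [← key]
              ring
        _ = _ := by
              have h0 : ((n:ℤ)+1) - (0:ℤ) = (n:ℤ)+1 := by ring
              rw [h0]

lemma P_ne (t : ℕ) : (∏ m ∈ Finset.Icc 1 t, ((V:RatFunc ℚ)^(m:ℤ) - V^(-(m:ℤ)))) ≠ 0 :=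
  Finset.prod_ne_zero_iff.2 fun i hi => Vpow_sub_ne (by
    have := (Finset.mem_Icc.mp hi).1; omega)

lemma P_eq (t : ℕ) : (∏ m ∈ Finset.Icc 1 t, ((V:RatFunc ℚ)^(m:ℤ) - V^(-(m:ℤ))))
    = qfact (V:RatFunc ℚ) t * ((V:RatFunc ℚ) - V⁻¹)^t := by
  have hv : (V:RatFunc ℚ) - V⁻¹ ≠ 0 := by
    have : (V:RatFunc ℚ) - V⁻¹ = V ^ (1:ℤ) - V ^ (-1:ℤ) := by simp
    rw [this]; exact Vpow_sub_ne (by omega)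
  have hc : (Finset.Icc 1 t).card = t := by simp
  have hp : ((V:RatFunc ℚ) - V⁻¹)^t = ∏ _m ∈ Finset.Icc 1 t, ((V:RatFunc ℚ) - V⁻¹) := by
    rw [Finset.prod_const, hc]
  rw [qfact, hp, ← Finset.prod_mul_distrib]
  refine Finset.prod_congr rfl fun m hm => ?_
  rw [qint, div_mul_cancel₀ _ hv]

lemma qbinom_eq (a s : ℕ) :
    qbinom (V:RatFunc ℚ) a s =
      (∏ j ∈ Finset.range s, ((V:RatFunc ℚ) ^ ((a:ℤ) - j) - V ^ ((j:ℤ) - a))) *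
        (∏ m ∈ Finset.Icc 1 s, ((V:RatFunc ℚ)^(m:ℤ) - V^(-(m:ℤ))))⁻¹ := by
  rw [eq_mul_inv_iff_mul_eq₀ (P_ne s), qbinom_prod]
  refine Finset.prod_congr rfl fun j _ => by rw [neg_sub]

lemma qbinom_zero_of_lt {a s : ℕ} (h : a < s) : qbinom (V:RatFunc ℚ) a s = 0 := by
  rw [qbinom_eq, Finset.prod_eq_zero (Finset.mem_range.mpr h)]
  · ring
  · simp

lemma qbinom_diag (a : ℕ) : qbinom (V:RatFunc ℚ) a a = 1 := by
  have h := qbinom_prod a a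
  have hQ : (∏ j ∈ Finset.range a, ((V:RatFunc ℚ) ^ ((a:ℤ) - j) - V ^ (-((a:ℤ) - j))))
      = ∏ m ∈ Finset.Icc 1 a, ((V:RatFunc ℚ)^(m:ℤ) - V^(-(m:ℤ))) := by
    refine Finset.prod_bij' (fun j _ => a - j) (fun m _ => a - m) ?_ ?_ ?_ ?_ ?_
    · intro j hj; simp only [Finset.mem_range] at hj; simp only [Finset.mem_Icc]; omega
    · intro m hm; simp only [Finset.mem_Icc] at hm; simp only [Finset.mem_range]; omega
    · intro j hj; simp only [Finset.mem_range] at hj; show a - (a - j) = j; omega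
    · intro m hm; simp only [Finset.mem_Icc] at hm; show a - (a - m) = m; omega
    · intro j hj; simp only [Finset.mem_range] at hj
      show _ = (V:RatFunc ℚ)^(((a - j : ℕ)):ℤ) - V^(-(((a - j : ℕ)):ℤ))
      have : ((a - j : ℕ) : ℤ) = (a:ℤ) - j := by omega
      rw [this]
  rw [hQ] at h
  exact mul_right_cancel₀ (P_ne a) (by rw [h, one_mul])

set_option maxHeartbeats 1000000
set_option synthInstance.maxHeartbeats 1000000

lemma Vmul (i j : ℤ) : (V:RatFunc ℚ)^i * V^j = V^(i+j) := (zpow_add₀ V_ne i j).symm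

noncomputable def ev (u : (RatFunc ℚ)ˣ) : H7 →ₐ[RatFunc ℚ] RatFunc ℚ :=
  MonoidAlgebra.lift _ _ _ ((Units.coeHom _).comp (zpowersHom (RatFunc ℚ)ˣ u))

lemma ev_Kz (u : (RatFunc ℚ)ˣ) (m : ℤ) : ev u (Kz m) = ((u : RatFunc ℚ)) ^ m := by
  rw [Kz, ev, MonoidAlgebra.lift_of]
  simp [Units.val_zpow_eq_zpow_val]

lemma ev_k7 (u : (RatFunc ℚ)ˣ) (e : RatFunc ℚ) (a : ℕ) (he : e * e = 1)
    (hu : (u : RatFunc ℚ) = e * V ^ (a:ℤ)) (s : ℕ) :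
    ev u (k7 s) = e ^ s * qbinom (V:RatFunc ℚ) a s := by
  have hinv : e⁻¹ = e := inv_eq_of_mul_eq_one_right he
  have huinv : ((u : RatFunc ℚ))⁻¹ = e * V ^ (-(a:ℤ)) := by
    rw [hu, mul_inv, hinv, zpow_neg]
  rw [k7, map_smul, map_prod]
  have hfac : ∀ j ∈ Finset.range s,
      ev u (((RatFunc.X : RatFunc ℚ) - (RatFunc.X : RatFunc ℚ)⁻¹)⁻¹ •
        ((RatFunc.X : RatFunc ℚ) ^ (-(j : ℤ)) • Kz 1 -
          (RatFunc.X : RatFunc ℚ) ^ (j : ℤ) • Kz (-1)))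
      = ((V:RatFunc ℚ) - V⁻¹)⁻¹ * (e * ((V:RatFunc ℚ) ^ ((a:ℤ) - j) - V ^ ((j:ℤ) - a))) := by
    intro j _
    rw [map_smul, map_sub, map_smul, map_smul, ev_Kz, ev_Kz]
    rw [zpow_one, zpow_neg_one, huinv, hu]
    rw [smul_eq_mul, smul_eq_mul, smul_eq_mul]
    congr 1
    rw [mul_sub e, show ((a:ℤ)-(j:ℤ)) = -(j:ℤ) + a from by ring,
      show ((j:ℤ)-(a:ℤ)) = (j:ℤ) + -(a:ℤ) from by ring, ← Vmul, ← Vmul]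
    ring
  rw [Finset.prod_congr rfl hfac]
  rw [Finset.prod_mul_distrib, Finset.prod_mul_distrib]
  rw [Finset.prod_const, Finset.prod_const, Finset.card_range]
  rw [qbinom_eq, smul_eq_mul]
  rw [P_eq]
  rw [mul_inv, ← inv_pow]
  ring

lemma Vn_ne {n : ℕ} (hn : 1 ≤ n) : (V:RatFunc ℚ)^(n:ℤ) - V^(-(n:ℤ)) ≠ 0 :=
  Vpow_sub_ne (by omega)

lemma key (n : ℕ) (a : ℕ) (ha : a ≤ n) :
    (V:RatFunc ℚ)^((a:ℤ)*n) - V^(-((a:ℤ)*n)) =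
      ((V:RatFunc ℚ)^(n:ℤ) - V^(-(n:ℤ))) *
        ∑ s ∈ Finset.Icc 1 n,
          pp n s * qbinom (V:RatFunc ℚ) a s * V^((a:ℤ)*(phi n s)) := by
  rcases Nat.eq_zero_or_pos a with rfl | hapos
  · rw [Finset.sum_eq_zero]
    · norm_num
    · intro s hs
      rw [qbinom_zero_of_lt (Finset.mem_Icc.mp hs).1]
      ring
  -- restrict the sum to Icc 1 a
  have hdisj : Disjoint (Finset.Icc 1 a) (Finset.Ioc a n) := by
    rw [Finset.disjoint_left]
    intro x hx hx'
    simp only [Finset.mem_Icc, Finset.mem_Ioc] at hx hx'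
    omega
  have hun : Finset.Icc 1 n = Finset.Icc 1 a ∪ Finset.Ioc a n := by
    ext x; simp only [Finset.mem_Icc, Finset.mem_Ioc, Finset.mem_union]; omega
  rw [hun, Finset.sum_union hdisj]
  have hz : ∑ s ∈ Finset.Ioc a n, pp n s * qbinom (V:RatFunc ℚ) a s * V^((a:ℤ)*(phi n s)) = 0 :=
    Finset.sum_eq_zero (fun s hs => by rw [qbinom_zero_of_lt (Finset.mem_Ioc.mp hs).1]; ring)
  rw [hz, add_zero]
  have hn : 1 ≤ n := le_trans hapos ha
  match a, hapos with
  | 1, _ =>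
    rw [show Finset.Icc 1 1 = {1} from rfl, Finset.sum_singleton]
    rw [qbinom_diag, mul_one, pp, Vmul]
    rw [show (-(phi n 1 : ℤ) + ((1:ℕ):ℤ)*(phi n 1)) = 0 by push_cast; ring]
    rw [zpow_zero, mul_one, show (((1:ℕ):ℤ) * n) = (n:ℤ) by push_cast; ring]
  | (t+2), _ =>
    rw [Finset.sum_Icc_succ_top (show 1 ≤ t+2 by omega)]
    rw [pp]
    rw [Finset.sum_attach (Finset.Ico 1 (t+2)) (fun r => pp n r *
      qbinom (RatFunc.X : RatFunc ℚ) (t+2) r *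
      (RatFunc.X : RatFunc ℚ) ^ (((phi n r : ℤ) - (phi n (t+2) : ℤ)) * ((t:ℤ) + 2)))]
    rw [show Finset.Ico 1 (t+2) = Finset.Icc 1 (t+1) from Finset.Ico_add_one_right_eq_Icc (a := 1) (b := t + 1)]
    set Φ : ℤ := (phi n (t+2) : ℤ) with hΦ
    have hSS : (∑ r ∈ Finset.Icc 1 (t+1), pp n r *
          qbinom (RatFunc.X : RatFunc ℚ) (t+2) r *
          (RatFunc.X : RatFunc ℚ) ^ (((phi n r : ℤ) - Φ) * ((t:ℤ) + 2))) *
          V ^ ((((t+2:ℕ)):ℤ) * Φ)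
        = ∑ r ∈ Finset.Icc 1 (t+1), pp n r * qbinom (V:RatFunc ℚ) (t+2) r *
            V ^ ((((t+2:ℕ)):ℤ) * (phi n r)) := by
      rw [Finset.sum_mul]
      refine Finset.sum_congr rfl fun r _ => ?_
      rw [mul_assoc, mul_assoc, Vmul]
      rw [show (((phi n r : ℤ) - Φ) * ((t:ℤ) + 2) + (((t+2:ℕ)):ℤ) * Φ)
        = (((t+2:ℕ)):ℤ) * (phi n r) by push_cast; ring]
      ring
    have hA : ((V:RatFunc ℚ)^(n:ℤ) - V^(-(n:ℤ))) *
        ((((RatFunc.X : RatFunc ℚ) ^ ((n : ℤ) * ((t:ℤ) + 2)) -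
          (RatFunc.X : RatFunc ℚ) ^ (-((n : ℤ) * ((t:ℤ) + 2)))) /
        ((RatFunc.X : RatFunc ℚ) ^ (Φ * ((t:ℤ) + 2)) *
          ((RatFunc.X : RatFunc ℚ) ^ (n : ℤ) - (RatFunc.X : RatFunc ℚ) ^ (-(n : ℤ))))) *
          V ^ ((((t+2:ℕ)):ℤ) * Φ))
        = V^((((t+2:ℕ)):ℤ)*n) - V^(-((((t+2:ℕ)):ℤ)*n)) := by
      rw [show (Φ * ((t:ℤ) + 2)) = ((((t+2:ℕ)):ℤ) * Φ) by push_cast; ring]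
      have hnz2 : (V:RatFunc ℚ)^(n:ℤ) - V^(-(n:ℤ)) ≠ 0 := Vn_ne hn
      rw [mul_comm ((V:RatFunc ℚ) ^ ((((t+2:ℕ)):ℤ) * Φ)), ← div_div,
        div_mul_cancel₀ _ (Vpow_ne ((((t+2:ℕ)):ℤ) * Φ)), mul_comm, div_mul_cancel₀ _ hnz2,
        show ((n:ℤ)*((t:ℤ)+2)) = ((((t+2:ℕ)):ℤ) * (n:ℤ)) by push_cast; ring]
    rw [qbinom_diag, mul_one]
    linear_combination -hA + ((V:RatFunc ℚ)^(n:ℤ) - V^(-(n:ℤ))) * hSS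

def Bdd (N : ℕ) (x : H7) : Prop :=
  ∀ m ∈ x.coeff.support, -(N:ℤ) ≤ Multiplicative.toAdd m ∧ Multiplicative.toAdd m ≤ (N:ℤ)

lemma Bdd_zero (N : ℕ) : Bdd N 0 := by intro m hm; simp at hm

lemma Bdd_Kz {m : ℤ} {N : ℕ} (h1 : -(N:ℤ) ≤ m) (h2 : m ≤ N) : Bdd N (Kz m) := by
  intro g hg
  have : g ∈ ({Multiplicative.ofAdd m} : Finset (Multiplicative ℤ)) :=
    Finsupp.support_single_subset hg
  simp only [Finset.mem_singleton] at this
  subst this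
  exact ⟨h1, h2⟩

lemma Bdd_smul {N : ℕ} {x : H7} (c : RatFunc ℚ) (h : Bdd N x) : Bdd N (c • x) := by
  intro m hm
  exact h m (Finsupp.support_smul hm)

lemma Bdd_add {N : ℕ} {x y : H7} (hx : Bdd N x) (hy : Bdd N y) : Bdd N (x + y) := by
  intro m hm
  rcases Finset.mem_union.mp (Finsupp.support_add hm) with h | h
  exacts [hx m h, hy m h]

lemma Bdd_neg {N : ℕ} {x : H7} (hx : Bdd N x) : Bdd N (-x) := by
  intro m hm
  exact hx m (by rwa [MonoidAlgebra.coeff_neg, Finsupp.support_neg] at hm)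

lemma Bdd_sub {N : ℕ} {x y : H7} (hx : Bdd N x) (hy : Bdd N y) : Bdd N (x - y) := by
  rw [sub_eq_add_neg]; exact Bdd_add hx (Bdd_neg hy)

lemma Bdd_mul {N M : ℕ} {x y : H7} (hx : Bdd N x) (hy : Bdd M y) : Bdd (N + M) (x * y) := by
  intro m hm
  have := MonoidAlgebra.support_coeff_mul_subset x y hm
  rw [Finset.mem_mul] at this
  obtain ⟨a, ha, b, hb, hab⟩ := this
  obtain ⟨ha1, ha2⟩ := hx a ha
  obtain ⟨hb1, hb2⟩ := hy b hb
  subst hab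
  have hab2 : Multiplicative.toAdd (a * b) = Multiplicative.toAdd a + Multiplicative.toAdd b := rfl
  rw [hab2]
  push_cast
  omega

lemma Bdd_mono {N M : ℕ} {x : H7} (h : Bdd N x) (hNM : N ≤ M) : Bdd M x := by
  intro m hm
  obtain ⟨h1, h2⟩ := h m hm
  constructor <;> omega

lemma Bdd_one : Bdd 0 (1 : H7) := by
  have : (1 : H7) = Kz 0 := rfl
  rw [this]; exact Bdd_Kz (by norm_num) (by norm_num)

lemma Bdd_sum {ι : Type*} {s : Finset ι} {f : ι → H7} {N : ℕ}
    (h : ∀ i ∈ s, Bdd N (f i)) : Bdd N (∑ i ∈ s, f i) := by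
  classical
  induction s using Finset.induction_on with
  | empty => simpa using Bdd_zero N
  | insert i s hni ih =>
    rw [Finset.sum_insert hni]
    exact Bdd_add (h _ (Finset.mem_insert_self _ _))
      (ih fun i hi => h i (Finset.mem_insert_of_mem hi))

lemma Bdd_prod_card {ι : Type*} {s : Finset ι} {f : ι → H7}
    (h : ∀ i ∈ s, Bdd 1 (f i)) : Bdd s.card (∏ i ∈ s, f i) := by
  classical
  induction s using Finset.induction_on with
  | empty => simpa using Bdd_one
  | insert i s hni ih =>
    rw [Finset.prod_insert hni, Finset.card_insert_of_notMem hni]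
    have := Bdd_mul (h _ (Finset.mem_insert_self _ _))
      (ih fun i hi => h i (Finset.mem_insert_of_mem hi))
    rwa [Nat.add_comm] at this

lemma Bdd_k7 (s : ℕ) : Bdd s (k7 s) := by
  rw [k7]
  apply Bdd_smul
  have := Bdd_prod_card (s := Finset.range s)
    (f := fun j => ((RatFunc.X : RatFunc ℚ) - (RatFunc.X : RatFunc ℚ)⁻¹)⁻¹ •
        ((RatFunc.X : RatFunc ℚ) ^ (-(j : ℤ)) • Kz 1 -
          (RatFunc.X : RatFunc ℚ) ^ (j : ℤ) • Kz (-1)))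
    (fun j _ => by
      apply Bdd_smul
      exact Bdd_sub (Bdd_smul _ (Bdd_Kz (by norm_num) (by norm_num)))
        (Bdd_smul _ (Bdd_Kz (by norm_num) (by norm_num))))
  rwa [Finset.card_range] at this

lemma Vnn (a b : ℕ) : (V:RatFunc ℚ)^(a:ℤ) + V^(b:ℤ) ≠ 0 := by
  intro h'
  have h : (RatFunc.X:RatFunc ℚ)^(a:ℤ) + RatFunc.X^(b:ℤ) = 0 := h'
  rw [zpow_natCast, zpow_natCast, ← RatFunc.algebraMap_X (K:=ℚ), ← map_pow, ← map_pow,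
    ← map_add] at h
  have h2 : (Polynomial.X ^ a + Polynomial.X ^ b : Polynomial ℚ) = 0 :=
    RatFunc.algebraMap_injective ℚ (by rw [h, map_zero])
  have h3 := congrArg (Polynomial.eval 1) h2
  simp at h3

lemma ev_eq_sum (u : (RatFunc ℚ)ˣ) (x : H7) :
    ev u x = ∑ m ∈ x.coeff.support, x.coeff m * ((u : RatFunc ℚ)) ^ (Multiplicative.toAdd m) := by
  rw [ev, MonoidAlgebra.lift_apply]
  rw [Finsupp.sum]
  refine Finset.sum_congr rfl fun m _ => ?_
  rw [smul_eq_mul]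
  congr 1
  simp [Units.val_zpow_eq_zpow_val]

lemma vanish {N : ℕ} {x : H7} (hb : Bdd N x)
    (hev : ∀ u : (RatFunc ℚ)ˣ, (∃ (e : RatFunc ℚ) (a : ℕ), (e = 1 ∨ e = -1) ∧ a ≤ N ∧
      (u : RatFunc ℚ) = e * V^(a:ℤ)) → ev u x = 0) : x = 0 := by
  classical
  set P : Polynomial (RatFunc ℚ) :=
    ∑ m ∈ x.coeff.support, Polynomial.C (x.coeff m) *
      Polynomial.X ^ (Multiplicative.toAdd m + N).toNat with hP
  -- the evaluation points
  set uf : (Fin (N+1) ⊕ Fin (N+1)) → (RatFunc ℚ)ˣ :=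
    Sum.elim (fun a => Units.mk0 ((V:RatFunc ℚ)^((a:ℕ):ℤ)) (Vpow_ne _))
      (fun a => Units.mk0 (-(V:RatFunc ℚ)^((a:ℕ):ℤ))
        (neg_ne_zero.mpr (Vpow_ne _))) with huf
  have hvalid : ∀ i, ∃ (e : RatFunc ℚ) (a : ℕ), (e = 1 ∨ e = -1) ∧ a ≤ N ∧
      ((uf i : RatFunc ℚ)) = e * V^(a:ℤ) := by
    rintro (a | a)
    · exact ⟨1, a, Or.inl rfl, by omega, by simp [huf]⟩
    · exact ⟨-1, a, Or.inr rfl, by omega, by simp [huf]⟩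
  have hinj : Function.Injective (fun i => ((uf i : RatFunc ℚ))) := by
    rintro (a | a) (b | b) hab <;> simp only [huf, Sum.elim_inl, Sum.elim_inr,
      Units.val_mk0] at hab
    · have := Vpow_inj hab
      simp only [Sum.inl.injEq]
      exact Fin.ext (by exact_mod_cast this)
    · exact absurd (by linear_combination hab : (V:RatFunc ℚ)^((b:ℕ):ℤ) + V^((a:ℕ):ℤ) = 0)
        (Vnn _ _)
    · exact absurd (by linear_combination -hab : (V:RatFunc ℚ)^((a:ℕ):ℤ) + V^((b:ℕ):ℤ) = 0)
        (Vnn _ _)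
    · have := Vpow_inj (neg_injective hab)
      simp only [Sum.inr.injEq]
      exact Fin.ext (by exact_mod_cast this)
  have heval : ∀ i, P.eval ((uf i : RatFunc ℚ)) = 0 := by
    intro i
    rw [hP, Polynomial.eval_finset_sum]
    have : ∀ m ∈ x.coeff.support,
        Polynomial.eval ((uf i : RatFunc ℚ))
          (Polynomial.C (x.coeff m) * Polynomial.X ^ (Multiplicative.toAdd m + N).toNat)
        = (x.coeff m * ((uf i : RatFunc ℚ)) ^ (Multiplicative.toAdd m)) *
            ((uf i : RatFunc ℚ)) ^ (N:ℤ) := by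
      intro m hm
      rw [Polynomial.eval_mul, Polynomial.eval_C, Polynomial.eval_pow, Polynomial.eval_X]
      rw [mul_assoc, ← zpow_add₀ (Units.ne_zero (uf i))]
      congr 1
      rw [← zpow_natCast]
      congr 1
      have := (hb m hm).1
      omega
    rw [Finset.sum_congr rfl this, ← Finset.sum_mul, ← ev_eq_sum]
    rw [hev (uf i) (hvalid i)]
    ring
  have hdeg : P.natDegree ≤ 2 * N := by
    apply Polynomial.natDegree_sum_le_of_forall_le
    intro m hm
    refine le_trans (Polynomial.natDegree_C_mul_le _ _) ?_
    refine le_trans (Polynomial.natDegree_X_pow_le _) ?_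
    have := (hb m hm).2
    omega
  have hPzero : P = 0 := by
    apply Polynomial.eq_zero_of_natDegree_lt_card_of_eval_eq_zero P hinj heval
    calc P.natDegree ≤ 2 * N := hdeg
      _ < Fintype.card (Fin (N+1) ⊕ Fin (N+1)) := by simp; omega
  by_contra hx
  obtain ⟨m0, hm0⟩ := Finsupp.support_nonempty_iff.mpr (mt MonoidAlgebra.coeff_eq_zero.mp hx)
  have hcoeff : P.coeff (Multiplicative.toAdd m0 + N).toNat = x.coeff m0 := by
    rw [hP, Polynomial.finset_sum_coeff]
    rw [Finset.sum_eq_single m0]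
    · rw [Polynomial.coeff_C_mul_X_pow]; simp
    · intro m hm hne
      rw [Polynomial.coeff_C_mul_X_pow]
      rw [if_neg]
      intro hEq
      apply hne
      have h1 := (hb m hm).1
      have h2 := (hb m0 hm0).1
      have : Multiplicative.toAdd m = Multiplicative.toAdd m0 := by omega
      exact Multiplicative.toAdd.injective this
    · intro h; exact absurd hm0 h
  rw [hPzero, Polynomial.coeff_zero] at hcoeff
  exact (Finsupp.mem_support_iff.mp hm0) hcoeff.symm

lemma phi_le {n s : ℕ} (h2 : s ≤ n) : s + phi n s ≤ n := by
  unfold phi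
  split_ifs with h
  · omega
  · rcases eq_or_lt_of_le h2 with rfl | h3
    · exact absurd (by simp) h
    · omega

lemma phi_parity (n s : ℕ) : ((s:ℤ) + phi n s) % 2 = (n:ℤ) % 2 := by
  unfold phi
  split_ifs with h
  · obtain ⟨k, hk⟩ := h
    push_cast
    omega
  · obtain ⟨k, hk⟩ := Int.not_even_iff_odd.1 h
    push_cast
    omega

lemma epow_eq {e : RatFunc ℚ} (he : e * e = 1) {i j : ℤ} (hij : (i - j) % 2 = 0) :
    e ^ i = e ^ j := by
  have hene : e ≠ 0 := fun h => by simp [h] at he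
  obtain ⟨k, hk⟩ : ∃ k, i - j = 2 * k := ⟨(i - j) / 2, by omega⟩
  have h1 : e ^ (i - j) = 1 := by
    rw [hk, zpow_mul, show e ^ (2:ℤ) = 1 by rw [zpow_two]; exact he, one_zpow]
  rw [show i = j + (i - j) by ring, zpow_add₀ hene, h1, mul_one]

theorem stmt_7' (n : ℕ) (hn : 1 ≤ n) :
    Kz n - Kz (-(n : ℤ)) =
      ((RatFunc.X : RatFunc ℚ) ^ (n : ℤ) - (RatFunc.X : RatFunc ℚ) ^ (-(n : ℤ))) •
        ∑ s ∈ Finset.Icc 1 n, pp n s • (k7 s * Kz (phi n s)) := by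
  rw [← sub_eq_zero]
  refine vanish (N := n) ?_ ?_
  · refine Bdd_sub (Bdd_sub (Bdd_Kz (by omega) (by omega)) (Bdd_Kz (by omega) (by omega))) ?_
    apply Bdd_smul
    apply Bdd_sum
    intro s hs
    obtain ⟨hs1, hs2⟩ := Finset.mem_Icc.mp hs
    apply Bdd_smul
    have hb := Bdd_mul (Bdd_k7 s)
      (Bdd_Kz (m := (phi n s : ℤ)) (N := phi n s) (by omega) (by omega))
    exact Bdd_mono hb (phi_le hs2)
  · rintro u ⟨e, a, he1, ha, hu⟩
    have he : e * e = 1 := by rcases he1 with rfl | rfl <;> norm_num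
    have hene : e ≠ 0 := fun h => by simp [h] at he
    rw [map_sub, map_sub, map_smul, map_sum, ev_Kz, ev_Kz]
    have hterm : ∀ s ∈ Finset.Icc 1 n, ev u (pp n s • (k7 s * Kz (phi n s))) =
        e ^ (n:ℤ) * (pp n s * qbinom (V:RatFunc ℚ) a s * V ^ ((a:ℤ) * (phi n s))) := by
      intro s hs
      rw [map_smul, map_mul, ev_Kz, ev_k7 u e a he hu, smul_eq_mul, hu]
      have h1 : (e * V ^ (a:ℤ)) ^ ((phi n s : ℕ):ℤ)
          = e ^ ((phi n s : ℕ):ℤ) * V ^ ((a:ℤ) * (phi n s)) := by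
        rw [mul_zpow, ← zpow_mul]
      have h2 : e ^ s * e ^ ((phi n s : ℕ):ℤ) = e ^ (n:ℤ) := by
        rw [← zpow_natCast e s, ← zpow_add₀ hene]
        exact epow_eq he (by have := phi_parity n s; omega)
      rw [h1]
      linear_combination (pp n s * qbinom (V:RatFunc ℚ) a s * V ^ ((a:ℤ) * (phi n s))) * h2
    rw [Finset.sum_congr rfl hterm, ← Finset.mul_sum, smul_eq_mul, hu]
    have hun : (e * V ^ (a:ℤ)) ^ (n:ℤ) = e ^ (n:ℤ) * V ^ ((a:ℤ) * n) := by
      rw [mul_zpow, ← zpow_mul]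
    have hun' : (e * V ^ (a:ℤ)) ^ (-(n:ℤ)) = e ^ (n:ℤ) * V ^ (-((a:ℤ) * n)) := by
      rw [mul_zpow, ← zpow_mul, show (a:ℤ) * (-(n:ℤ)) = -((a:ℤ)*n) by ring]
      congr 1
      exact epow_eq he (by omega)
    rw [hun, hun']
    linear_combination e ^ (n:ℤ) * key n a ha


/-- `K^n - K^{-n} = (v^n - v^{-n}) Σ_{s=1}^n p_{n,s} k_s K^{φ_n(s)}`. -/
theorem stmt_7 (n : ℕ) (hn : 1 ≤ n) :
    Kz n - Kz (-(n : ℤ)) =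
      ((RatFunc.X : RatFunc ℚ) ^ (n : ℤ) - (RatFunc.X : RatFunc ℚ) ^ (-(n : ℤ))) •
        ∑ s ∈ Finset.Icc 1 n, pp n s • (k7 s * Kz (phi n s)) := by
  exact stmt_7' n hn
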